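/- DFS stack invariant: in every reachable state [q₁, …, q_m] of the DFS frontier process, for every index i < m there exists a position r such that r ++ [false] is a prefix of qᵢ (possibly equal to qᵢ) and q_{i+1} = r ++ [true]; that is, each open node on the stack is the right sibling of an ancestor-or-self of the open node just above it on the stack. -/

import Mathlib

/-- Small-step dynamics of the DFS frontier process on binary-tree positions:
from `q :: L` either fathom the node at position `q`, or branch it, pushing its
two children. -/
inductive FStep : List (List Bool) → List (List Bool) → Prop
  | fathom (q : List Bool) (L : List (List Bool)) : FStep (q :: L) L
  | branch (q : List Bool) (L : List (List Bool)) :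
      FStep (q :: L) ((q ++ [false]) :: (q ++ [true]) :: L)

/-- A frontier state is reachable if it is obtained from the initial state
`[[]]` (only the root is open) by a finite sequence of steps. -/


def DfsInv (S : List (List Bool)) : Prop :=
  ∀ i (hi : S.length > i + 1), ∃ r : List Bool,
      (r ++ [false]) <+: S[i] ∧ S[i + 1] = r ++ [true]

theorem inv_step {S T} (h : FStep S T) (hS : DfsInv S) : DfsInv T := by
  cases h with
  | fathom q L =>
      intro i hi
      have := hS (i+1) (by simpa using Nat.succ_lt_succ hi)
      simpa using this
  | branch q L =>
      intro i hi
      match i with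
      | 0 => exact ⟨q, List.prefix_refl _, rfl⟩
      | 1 =>
          simp only [List.length_cons] at hi
          obtain ⟨r, hr1, hr2⟩ := hS 0 (by simp; omega)
          exact ⟨r, hr1.trans (List.prefix_append _ _), by simpa using hr2⟩
      | (n+2) =>
          simp only [List.length_cons] at hi
          obtain ⟨r, hr1, hr2⟩ := hS (n+1) (by simp; omega)
          exact ⟨r, by simpa using hr1, by simpa using hr2⟩

def Reachable (S : List (List Bool)) : Prop :=
  Relation.ReflTransGen FStep [([] : List Bool)] S

theorem reachable_inv (S : List (List Bool)) (hS : Reachable S) : DfsInv S := by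
  induction hS with
  | refl => intro i hi; simp at hi
  | tail _ hstep ih => exact inv_step hstep ih

/-- DFS stack invariant: each open node on the stack is the right sibling of
an ancestor-or-self of the open node just above it on the stack. -/
theorem dfs_stack_invariant (S : List (List Bool)) (hS : Reachable S)
    (i : ℕ) (hi : i + 1 < S.length) :
    ∃ r : List Bool,
      (r ++ [false]) <+: S[i] ∧ S[i + 1] = r ++ [true] := by
  exact reachable_inv S hS i hi
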